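/- Let k be a natural number, h > 0, a, b ∈ ℝ, and let v : ℝ × ℝ → ℝ be a tensor-product polynomial of degree at most k in each of the two variables (i.e., v ∈ Q_k). Let K = [a, a+h] × [b, b+h] be the square of side length h and let F = {a+h} × [b, b+h] be its right edge. Then ∫_b^{b+h} v(a+h, y)^2 dy ≤ (k+1)^2 · h^{-1} · ∫_a^{a+h} ∫_b^{b+h} v(x,y)^2 dy dx. -/

import Mathlib

open Finset

lemma alt_sum_choose (n : ℕ) : ∀ (m r : ℕ),
    ∑ j ∈ range (n+1), (-1:ℝ)^j * (n.choose j) * ((m+j).choose r) =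
      (-1)^n * (if n ≤ r then ((m.choose (r-n) : ℝ)) else 0) := by
  induction n with
  | zero => intro m r; simp
  | succ n ih =>
    intro m r
    set F : ℕ → ℝ := fun j => ((m+j).choose r : ℝ) with hF
    have hS1 : ∑ j ∈ range (n+2), (-1:ℝ)^j * (n.choose j) * F j
        = ∑ j ∈ range (n+1), (-1:ℝ)^j * (n.choose j) * F j := by
      rw [Finset.sum_range_succ]; simp [Nat.choose_succ_self]
    have hT : ∑ i ∈ range (n+1), (-1:ℝ)^i * (n.choose (i+1)) * F (i+1)
        = F 0 - ∑ j ∈ range (n+1), (-1:ℝ)^j * (n.choose j) * F j := by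
      have := Finset.sum_range_succ' (fun j => (-1:ℝ)^j * (n.choose j) * F j) (n+1)
      rw [hS1] at this
      have h2 : ∀ i, ((-1:ℝ))^(i+1) * (n.choose (i+1)) * F (i+1)
          = -((-1:ℝ)^i * (n.choose (i+1)) * F (i+1)) := by intro i; ring
      simp only [h2, Finset.sum_neg_distrib] at this
      simp only [Nat.choose_zero_right, Nat.cast_one, pow_zero, one_mul, mul_one] at this
      linarith [this]
    have key : ∑ j ∈ range (n+2), (-1:ℝ)^j * ((n+1).choose j) * F j
        = ∑ i ∈ range (n+1), (-1:ℝ)^i * (n.choose i) * (F i - F (i+1)) := by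
      rw [Finset.sum_range_succ' (fun j => (-1:ℝ)^j * ((n+1).choose j) * F j) (n+1)]
      have h1 : ∀ i, (((n+1).choose (i+1) : ℝ)) = (n.choose i : ℝ) + (n.choose (i+1) : ℝ) := by
        intro i; exact_mod_cast congrArg (Nat.cast (R := ℝ)) (Nat.choose_succ_succ n i)
      have expand : ∀ i, (-1:ℝ)^(i+1) * ((n+1).choose (i+1)) * F (i+1)
          = -((-1:ℝ)^i * (n.choose i) * F (i+1)) - ((-1:ℝ)^i * (n.choose (i+1)) * F (i+1)) := by
        intro i; rw [h1]; ring
      rw [Finset.sum_congr rfl (fun i _ => expand i)]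
      rw [Finset.sum_sub_distrib, hT]
      simp only [Nat.choose_zero_right, Nat.cast_one, pow_zero, one_mul, mul_one]
      simp only [mul_sub, Finset.sum_sub_distrib, Finset.sum_neg_distrib]
      ring
    rw [show n+1+1 = n+2 from rfl, key]
    rcases r with _ | r'
    · have : ∀ i ∈ range (n+1), (-1:ℝ)^i * (n.choose i) * (F i - F (i+1)) = 0 := by
        intro i _; simp [hF]
      rw [Finset.sum_eq_zero this]
      simp [Nat.succ_ne_zero]
    · have hFd : ∀ i, F i - F (i+1) = -(((m+i).choose r' : ℝ)) := by
        intro i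
        have : (m+(i+1)).choose (r'+1) = (m+i).choose (r'+1) + (m+i).choose r' := by
          rw [show m+(i+1) = (m+i)+1 by ring, Nat.choose_succ_succ]
          ring
        simp only [hF, this]
        push_cast
        ring
      have : ∀ i ∈ range (n+1), (-1:ℝ)^i * (n.choose i) * (F i - F (i+1))
          = -((-1:ℝ)^i * (n.choose i) * ((m+i).choose r')) := by
        intro i _; rw [hFd]; ring
      rw [Finset.sum_congr rfl this, Finset.sum_neg_distrib, ih m r']
      have h4 : r'+1-(n+1) = r'-n := by omega
      rw [h4]
      by_cases hc : n ≤ r'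
      · rw [if_pos hc, if_pos (by omega : n+1 ≤ r'+1)]; ring
      · rw [if_neg hc, if_neg (by omega : ¬ (n+1 ≤ r'+1))]; ring

open intervalIntegral MeasureTheory in
lemma beta_int : ∀ (q p : ℕ), ∫ x in (0:ℝ)..1, x^p * (x-1)^q
    = (-1:ℝ)^q * p.factorial * q.factorial / (p+q+1).factorial := by
  intro q
  induction q with
  | zero =>
    intro p
    simp only [pow_zero, mul_one]
    rw [integral_pow, show p+0+1 = p+1 by ring, Nat.factorial_succ]
    have hp : ((p:ℝ)+1) ≠ 0 := by positivity
    have hf : (p.factorial : ℝ) ≠ 0 := by exact_mod_cast p.factorial_ne_zero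
    rw [one_pow]
    rw [zero_pow (by omega : p+1 ≠ 0)]
    field_simp
    push_cast [Nat.factorial_zero]; ring
  | succ q ih =>
    intro p
    have hu : ∀ x ∈ Set.uIcc (0:ℝ) 1, HasDerivAt (fun x : ℝ => (x-1)^(q+1))
        ((q+1) * (x-1)^q) x := by
      intro x _
      have h1 : HasDerivAt (fun x : ℝ => x - 1) 1 x := (hasDerivAt_id x).sub_const 1
      have h2 := (hasDerivAt_pow (q+1) (x-1)).comp x h1
      simpa [Function.comp_def] using h2
    have hv : ∀ x ∈ Set.uIcc (0:ℝ) 1, HasDerivAt (fun x : ℝ => x^(p+1)/(p+1))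
        (x^p) x := by
      intro x _
      have h1 := (hasDerivAt_pow (p+1) x).div_const ((p:ℝ)+1)
      have hp : ((p:ℝ)+1) ≠ 0 := by positivity
      have : ((p:ℝ)+1) * x^p / ((p:ℝ)+1) = x^p := by field_simp
      simpa [this] using h1
    have hInt1 : IntervalIntegrable (fun x : ℝ => (q+1 : ℝ) * (x-1)^q) volume 0 1 :=
      (Continuous.intervalIntegrable (by continuity) 0 1)
    have hInt2 : IntervalIntegrable (fun x : ℝ => x^p) volume 0 1 :=
      (Continuous.intervalIntegrable (by continuity) 0 1)
    have ibp := intervalIntegral.integral_mul_deriv_eq_deriv_mul hu hv hInt1 hInt2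
    have lhs_eq : ∫ x in (0:ℝ)..1, x^p * (x-1)^(q+1)
        = ∫ x in (0:ℝ)..1, (x-1)^(q+1) * x^p := by
      apply intervalIntegral.integral_congr; intro x _; ring
    rw [lhs_eq, ibp]
    have hre : ∫ x in (0:ℝ)..1, (q+1:ℝ) * (x-1)^q * (x^(p+1)/(p+1))
        = ((q+1:ℝ)/(p+1)) * ∫ x in (0:ℝ)..1, x^(p+1) * (x-1)^q := by
      rw [← intervalIntegral.integral_const_mul]
      apply intervalIntegral.integral_congr; intro x _
      field_simp
    rw [hre, ih (p+1)]
    have e1 : ((p+1+q+1).factorial : ℝ) = (p+(q+1)+1).factorial := by norm_num; ring_nf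
    have e2 : ((p+1).factorial : ℝ) = (p+1) * p.factorial := by
      rw [Nat.factorial_succ]; push_cast; ring
    have e3 : ((q+1).factorial : ℝ) = (q+1) * q.factorial := by
      rw [Nat.factorial_succ]; push_cast; ring
    have hp : ((p:ℝ)+1) ≠ 0 := by positivity
    have hfact : ((p+(q+1)+1).factorial : ℝ) ≠ 0 := by
      exact_mod_cast (p+(q+1)+1).factorial_ne_zero
    rw [e1] at *
    simp only [pow_succ]
    rw [e2, e3]
    field_simp
    ring

open intervalIntegral MeasureTheory in
lemma integral_monomial_L (m n : ℕ) :
    ∫ x in (0:ℝ)..1, x^m * (∑ j ∈ range (n+1), (n.choose j:ℝ)^2 * x^j * (x-1)^(n-j))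
      = (m.factorial : ℝ) * n.factorial * (m.choose n) / (m+n+1).factorial := by
  have step1 : ∀ x : ℝ, x^m * (∑ j ∈ range (n+1), (n.choose j:ℝ)^2 * x^j * (x-1)^(n-j))
      = ∑ j ∈ range (n+1), (n.choose j:ℝ)^2 * (x^(m+j) * (x-1)^(n-j)) := by
    intro x
    rw [Finset.mul_sum]
    apply Finset.sum_congr rfl; intro j _
    rw [pow_add]; ring
  simp only [step1]
  rw [intervalIntegral.integral_finset_sum (fun j _ =>
    (Continuous.intervalIntegrable (by continuity) 0 1))]
  have step2 : ∀ j ∈ range (n+1),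
      (∫ x in (0:ℝ)..1, (n.choose j:ℝ)^2 * (x^(m+j) * (x-1)^(n-j)))
      = ((m.factorial : ℝ) * n.factorial / (m+n+1).factorial) *
          ((-1:ℝ)^n * ((-1:ℝ)^j * (n.choose j) * ((m+j).choose m))) := by
    intro j hj
    have hjn : j ≤ n := by simpa [Nat.lt_succ_iff] using hj
    rw [intervalIntegral.integral_const_mul, beta_int]
    have hidx : m + j + (n - j) + 1 = m + n + 1 := by omega
    rw [hidx]
    have h1R : (n.choose j : ℝ) * j.factorial * (n-j).factorial = n.factorial := by
      exact_mod_cast congrArg (Nat.cast (R:=ℝ)) (Nat.choose_mul_factorial_mul_factorial hjn)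
    have h2R : ((m+j).choose m : ℝ) * m.factorial * j.factorial = (m+j).factorial := by
      have := Nat.choose_mul_factorial_mul_factorial (show m ≤ m + j by omega)
      rw [Nat.add_sub_cancel_left] at this
      exact_mod_cast congrArg (Nat.cast (R:=ℝ)) this
    have hj' : (j.factorial:ℝ) ≠ 0 := by exact_mod_cast j.factorial_ne_zero
    have key : (n.choose j:ℝ)^2 * ((m+j).factorial * (n-j).factorial)
        = (m.factorial:ℝ) * n.factorial * ((n.choose j:ℝ) * ((m+j).choose m)) := by
      apply mul_right_cancel₀ hj'
      linear_combination ((n.choose j:ℝ) * (m+j).factorial) * h1R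
        - ((n.choose j:ℝ) * n.factorial) * h2R
    have hsign : ((-1:ℝ))^(n-j) = (-1:ℝ)^n * (-1:ℝ)^j := by
      have h5 : n + j = (n - j) + 2*j := by omega
      have : ((-1:ℝ))^(n+j) = (-1:ℝ)^(n-j) := by
        rw [h5, pow_add, pow_mul]; norm_num
      rw [← this, pow_add]
    rw [hsign]
    have hF : ((m+n+1).factorial : ℝ) ≠ 0 := by exact_mod_cast (m+n+1).factorial_ne_zero
    field_simp
    linear_combination key
  rw [Finset.sum_congr rfl step2, ← Finset.mul_sum, ← Finset.mul_sum, alt_sum_choose n m m]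
  by_cases hnm : n ≤ m
  · rw [if_pos hnm, Nat.choose_symm hnm]
    have : ((-1:ℝ))^n * ((-1:ℝ)^n * (m.choose n : ℝ)) = (m.choose n : ℝ) := by
      rw [← mul_assoc, ← pow_add]
      have : ((-1:ℝ))^(n+n) = 1 := by rw [show n+n = 2*n by ring, pow_mul]; norm_num
      rw [this, one_mul]
    rw [this]
    ring
  · rw [if_neg hnm]
    rw [Nat.choose_eq_zero_of_lt (by omega : m < n)]
    simp

noncomputable def Lpoly (n : ℕ) : Polynomial ℝ :=
  ∑ j ∈ range (n+1), Polynomial.C ((n.choose j : ℝ)^2) * Polynomial.X^j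
      * (Polynomial.X - Polynomial.C 1)^(n-j)

noncomputable def Wpoly (k : ℕ) : Polynomial ℝ :=
  ∑ n ∈ range (k+1), Polynomial.C (2*(n:ℝ)+1) * Lpoly n

lemma Lpoly_eval (n : ℕ) (x : ℝ) :
    (Lpoly n).eval x = ∑ j ∈ range (n+1), (n.choose j:ℝ)^2 * x^j * (x-1)^(n-j) := by
  simp [Lpoly, Polynomial.eval_finset_sum]

lemma Wpoly_eval (k : ℕ) (x : ℝ) :
    (Wpoly k).eval x = ∑ n ∈ range (k+1), (2*(n:ℝ)+1) * (Lpoly n).eval x := by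
  simp [Wpoly, Polynomial.eval_finset_sum]

lemma Lpoly_natDegree (n : ℕ) : (Lpoly n).natDegree ≤ n := by
  apply Polynomial.natDegree_sum_le_of_forall_le
  intro j hj
  have hjn : j ≤ n := by simpa [Nat.lt_succ_iff] using hj
  calc (Polynomial.C ((n.choose j : ℝ)^2) * Polynomial.X^j
      * (Polynomial.X - Polynomial.C 1)^(n-j)).natDegree
      ≤ (Polynomial.C ((n.choose j : ℝ)^2) * Polynomial.X^j).natDegree
        + ((Polynomial.X - Polynomial.C 1)^(n-j) : Polynomial ℝ).natDegree :=
        Polynomial.natDegree_mul_le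
    _ ≤ j + (n - j) := by
        gcongr
        · calc _ ≤ (Polynomial.C ((n.choose j : ℝ)^2)).natDegree
              + (Polynomial.X^j : Polynomial ℝ).natDegree := Polynomial.natDegree_mul_le
          _ ≤ j := by simp [Polynomial.natDegree_X_pow]
        · calc _ ≤ (n-j) * (Polynomial.X - Polynomial.C 1 : Polynomial ℝ).natDegree :=
              Polynomial.natDegree_pow_le
          _ ≤ (n-j) := by
              rw [Polynomial.natDegree_X_sub_C 1]
              omega
    _ ≤ n := by omega

lemma Wpoly_natDegree (k : ℕ) : (Wpoly k).natDegree ≤ k := by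
  apply Polynomial.natDegree_sum_le_of_forall_le
  intro n hn
  have hnk : n ≤ k := by simpa [Nat.lt_succ_iff] using hn
  calc (Polynomial.C (2*(n:ℝ)+1) * Lpoly n).natDegree
      ≤ (Polynomial.C (2*(n:ℝ)+1)).natDegree + (Lpoly n).natDegree :=
        Polynomial.natDegree_mul_le
    _ ≤ n := by rw [Polynomial.natDegree_C]; simpa using Lpoly_natDegree n
    _ ≤ k := hnk

lemma Lpoly_eval_one (n : ℕ) : (Lpoly n).eval 1 = 1 := by
  rw [Lpoly_eval]
  rw [Finset.sum_eq_single n]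
  · simp
  · intro j hj hne
    have hjn : j ≤ n := by simpa [Nat.lt_succ_iff] using hj
    have : (1:ℝ) - 1 = 0 := by ring
    rw [this, zero_pow (by omega : n - j ≠ 0)]
    ring
  · intro h; exact absurd (Finset.self_mem_range_succ n) h

lemma sum_odds (k : ℕ) : ∑ n ∈ range (k+1), (2*(n:ℝ)+1) = ((k:ℝ)+1)^2 := by
  induction k with
  | zero => simp
  | succ k ih => rw [Finset.sum_range_succ, ih]; push_cast; ring

lemma Wpoly_eval_one (k : ℕ) : (Wpoly k).eval 1 = ((k:ℝ)+1)^2 := by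
  rw [Wpoly_eval]
  have h : ∀ n ∈ range (k+1), (2*(n:ℝ)+1) * (Lpoly n).eval 1 = 2*(n:ℝ)+1 := by
    intro n _; rw [Lpoly_eval_one]; ring
  rw [Finset.sum_congr rfl h, sum_odds]

open intervalIntegral MeasureTheory in
lemma moment_W (k m : ℕ) (hm : m ≤ k) :
    ∫ x in (0:ℝ)..1, x^m * (Wpoly k).eval x = 1 := by
  have step1 : ∀ x : ℝ, x^m * (Wpoly k).eval x
      = ∑ n ∈ range (k+1), (2*(n:ℝ)+1) * (x^m * (Lpoly n).eval x) := by
    intro x; rw [Wpoly_eval, Finset.mul_sum]; apply Finset.sum_congr rfl; intro n _; ring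
  simp only [step1]
  rw [intervalIntegral.integral_finset_sum (fun n _ =>
    (Continuous.intervalIntegrable
      (by exact continuous_const.mul ((continuous_pow m).mul (Lpoly n).continuous)) 0 1))]
  have step2 : ∀ n ∈ range (k+1),
      (∫ x in (0:ℝ)..1, (2*(n:ℝ)+1) * (x^m * (Lpoly n).eval x))
      = (2*(n:ℝ)+1) * ((m.factorial : ℝ) * n.factorial * (m.choose n) / (m+n+1).factorial) := by
    intro n _
    rw [intervalIntegral.integral_const_mul]
    congr 1
    simp only [Lpoly_eval]
    exact integral_monomial_L m n
  rw [Finset.sum_congr rfl step2]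
  -- telescoping
  set f : ℕ → ℝ := fun n => (m.choose n : ℝ) * m.factorial * n.factorial / (m+n).factorial
    with hf
  have tele : ∀ n ∈ range (k+1),
      (2*(n:ℝ)+1) * ((m.factorial : ℝ) * n.factorial * (m.choose n) / (m+n+1).factorial)
      = f n - f (n+1) := by
    intro n _
    have hrec : (m.choose (n+1) : ℝ) * (n+1) = (m.choose n : ℝ) * ((m-n : ℕ) : ℝ) := by
      exact_mod_cast congrArg (Nat.cast (R:=ℝ)) (Nat.choose_succ_right_eq m n)
    have hfac1 : ((m+n+1).factorial : ℝ) = (m+n+1) * (m+n).factorial := by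
      rw [show m+n+1 = (m+n)+1 by ring, Nat.factorial_succ]; push_cast; ring
    have hfac2 : ((m+(n+1)).factorial : ℝ) = (m+n+1) * (m+n).factorial := by
      rw [show m+(n+1) = (m+n)+1 by ring, Nat.factorial_succ]; push_cast; ring
    have hfacn : ((n+1).factorial : ℝ) = (n+1) * n.factorial := by
      rw [Nat.factorial_succ]; push_cast; ring
    have hne1 : ((m+n).factorial : ℝ) ≠ 0 := by exact_mod_cast (m+n).factorial_ne_zero
    have hne2 : ((m:ℝ)+n+1) ≠ 0 := by positivity
    simp only [hf]
    rw [hfac1, hfac2, hfacn]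
    by_cases hnm : n ≤ m
    · have hsub : ((m-n : ℕ) : ℝ) = (m:ℝ) - n := by
        have : (m-n) + n = m := by omega
        have := congrArg (Nat.cast (R:=ℝ)) this
        push_cast at this; linarith
      rw [hsub] at hrec
      have key2 : (2*(n:ℝ)+1) * ((m.factorial:ℝ) * n.factorial * (m.choose n))
          = (m.choose n:ℝ) * m.factorial * n.factorial * ((m:ℝ)+n+1)
            - (m.choose (n+1):ℝ) * m.factorial * ((n+1)*n.factorial) := by
        linear_combination ((m.factorial:ℝ) * n.factorial) * hrec
      calc (2*(n:ℝ)+1) * ((m.factorial : ℝ) * n.factorial * (m.choose n)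
              / (((m:ℝ)+n+1) * (m+n).factorial))
          = ((2*(n:ℝ)+1) * ((m.factorial:ℝ) * n.factorial * (m.choose n)))
              / (((m:ℝ)+n+1) * (m+n).factorial) := by ring
        _ = ((m.choose n:ℝ) * m.factorial * n.factorial * ((m:ℝ)+n+1)
              - (m.choose (n+1):ℝ) * m.factorial * ((n+1)*n.factorial))
              / (((m:ℝ)+n+1) * (m+n).factorial) := by rw [key2]
        _ = (m.choose n : ℝ) * m.factorial * n.factorial / (m+n).factorial
              - (m.choose (n+1) : ℝ) * m.factorial * ((n+1) * n.factorial)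
              / (((m:ℝ)+n+1) * (m+n).factorial) := by
            field_simp
    · have h0 : (m.choose n : ℝ) = 0 := by
        rw [Nat.choose_eq_zero_of_lt (by omega)]; push_cast; ring
      have h1 : (m.choose (n+1) : ℝ) = 0 := by
        rw [Nat.choose_eq_zero_of_lt (by omega)]; push_cast; ring
      rw [h0, h1]; ring
  rw [Finset.sum_congr rfl tele, Finset.sum_range_sub' f (k+1)]
  have hf0 : f 0 = 1 := by
    simp only [hf]
    have : (m.factorial : ℝ) ≠ 0 := by exact_mod_cast m.factorial_ne_zero
    simp [Nat.choose_zero_right, Nat.factorial_zero]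
    exact m.factorial_ne_zero
  have hfk : f (k+1) = 0 := by
    simp only [hf]
    rw [Nat.choose_eq_zero_of_lt (by omega : m < k+1)]
    push_cast; ring
  rw [hf0, hfk]; ring

open intervalIntegral MeasureTheory in
lemma reproducing (k : ℕ) (p : Polynomial ℝ) (hp : p.natDegree ≤ k) :
    ∫ x in (0:ℝ)..1, p.eval x * (Wpoly k).eval x = p.eval 1 := by
  have hev : ∀ x : ℝ, p.eval x = ∑ m ∈ range (k+1), p.coeff m * x^m := by
    intro x
    exact Polynomial.eval_eq_sum_range' (by omega : p.natDegree < k+1) x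
  have step1 : ∀ x : ℝ, p.eval x * (Wpoly k).eval x
      = ∑ m ∈ range (k+1), p.coeff m * (x^m * (Wpoly k).eval x) := by
    intro x; rw [hev x, Finset.sum_mul]; apply Finset.sum_congr rfl; intro m _; ring
  simp only [step1]
  rw [intervalIntegral.integral_finset_sum (fun m _ =>
    (Continuous.intervalIntegrable
      (by exact continuous_const.mul ((continuous_pow m).mul (Wpoly k).continuous)) 0 1))]
  have step2 : ∀ m ∈ range (k+1),
      (∫ x in (0:ℝ)..1, p.coeff m * (x^m * (Wpoly k).eval x)) = p.coeff m := by
    intro m hm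
    rw [intervalIntegral.integral_const_mul, moment_W k m (by simpa [Nat.lt_succ_iff] using hm)]
    ring
  rw [Finset.sum_congr rfl step2, hev 1]
  apply Finset.sum_congr rfl; intro m _; rw [one_pow, mul_one]

open intervalIntegral MeasureTheory in
lemma W_sq_integral (k : ℕ) :
    ∫ x in (0:ℝ)..1, ((Wpoly k).eval x)^2 = ((k:ℝ)+1)^2 := by
  have h := reproducing k (Wpoly k) (Wpoly_natDegree k)
  rw [Wpoly_eval_one] at h
  rw [← h]
  apply intervalIntegral.integral_congr; intro x _; ring

open intervalIntegral MeasureTheory in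
lemma trace_unit (k : ℕ) (p : Polynomial ℝ) (hp : p.natDegree ≤ k) :
    (p.eval 1)^2 ≤ ((k:ℝ)+1)^2 * ∫ x in (0:ℝ)..1, (p.eval x)^2 := by
  set Cst : ℝ := ((k:ℝ)+1)^2 with hC
  have hCpos : 0 < Cst := by positivity
  set B : ℝ := p.eval 1 with hB
  have hrep : ∫ x in (0:ℝ)..1, p.eval x * (Wpoly k).eval x = B := reproducing k p hp
  have hW2 : ∫ x in (0:ℝ)..1, ((Wpoly k).eval x)^2 = Cst := W_sq_integral k
  have hint1 : IntervalIntegrable (fun x => (p.eval x)^2) volume 0 1 :=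
    Continuous.intervalIntegrable (by exact (p.continuous).pow 2) 0 1
  have hint2 : IntervalIntegrable (fun x => p.eval x * (Wpoly k).eval x) volume 0 1 :=
    Continuous.intervalIntegrable ((p.continuous).mul (Wpoly k).continuous) 0 1
  have hint3 : IntervalIntegrable (fun x => ((Wpoly k).eval x)^2) volume 0 1 :=
    Continuous.intervalIntegrable ((Wpoly k).continuous.pow 2) 0 1
  have hexp : ∫ x in (0:ℝ)..1, (Cst * p.eval x - B * (Wpoly k).eval x)^2
      = Cst^2 * (∫ x in (0:ℝ)..1, (p.eval x)^2) - 2*Cst*B^2 + B^2*Cst := by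
    have hptw : ∀ x ∈ Set.uIcc (0:ℝ) 1, (Cst * p.eval x - B * (Wpoly k).eval x)^2
        = Cst^2 * (p.eval x)^2 - (2*Cst*B) * (p.eval x * (Wpoly k).eval x)
          + B^2 * ((Wpoly k).eval x)^2 := by
      intro x _; ring
    rw [intervalIntegral.integral_congr hptw]
    rw [intervalIntegral.integral_add (((hint1.const_mul _).sub (hint2.const_mul _)))
      (hint3.const_mul _)]
    rw [intervalIntegral.integral_sub (hint1.const_mul _) (hint2.const_mul _)]
    rw [intervalIntegral.integral_const_mul, intervalIntegral.integral_const_mul,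
      intervalIntegral.integral_const_mul, hrep, hW2]
    ring
  have hnonneg : 0 ≤ ∫ x in (0:ℝ)..1, (Cst * p.eval x - B * (Wpoly k).eval x)^2 := by
    apply intervalIntegral.integral_nonneg (by norm_num)
    intro x _; positivity
  rw [hexp] at hnonneg
  nlinarith [hCpos, hnonneg]

open intervalIntegral MeasureTheory in
lemma trace_interval (k : ℕ) (h a : ℝ) (hh : 0 < h) (p : Polynomial ℝ)
    (hp : p.natDegree ≤ k) :
    (p.eval (a+h))^2 ≤ ((k:ℝ)+1)^2 * h⁻¹ * ∫ x in a..(a+h), (p.eval x)^2 := by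
  set q : Polynomial ℝ := p.comp (Polynomial.C a + Polynomial.C h * Polynomial.X) with hq
  have hqdeg : q.natDegree ≤ k := by
    refine le_trans Polynomial.natDegree_comp_le ?_
    have h1 : (Polynomial.C a + Polynomial.C h * Polynomial.X : Polynomial ℝ).natDegree ≤ 1 := by
      refine le_trans (Polynomial.natDegree_add_le _ _) ?_
      simp only [Polynomial.natDegree_C, max_le_iff]
      constructor
      · omega
      · exact le_trans (Polynomial.natDegree_C_mul_le h Polynomial.X)
          (le_of_eq Polynomial.natDegree_X)
    calc p.natDegree * (Polynomial.C a + Polynomial.C h * Polynomial.X).natDegree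
        ≤ p.natDegree * 1 := by exact Nat.mul_le_mul_left _ h1
      _ ≤ k := by omega
  have hqev : ∀ t : ℝ, q.eval t = p.eval (h * t + a) := by
    intro t
    rw [hq, Polynomial.eval_comp]
    simp only [Polynomial.eval_add, Polynomial.eval_mul, Polynomial.eval_C, Polynomial.eval_X]
    rw [add_comm]
  have h1 := trace_unit k q hqdeg
  have hsub : ∫ t in (0:ℝ)..1, (q.eval t)^2
      = h⁻¹ * ∫ x in a..(a+h), (p.eval x)^2 := by
    have : ∀ t : ℝ, (q.eval t)^2 = (fun x => (p.eval x)^2) (h * t + a) := by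
      intro t; rw [hqev]
    simp only [this]
    rw [intervalIntegral.integral_comp_mul_add (fun x => (p.eval x)^2) (ne_of_gt hh) a]
    rw [smul_eq_mul, show h * 0 + a = a by ring, show h * 1 + a = a + h by ring]
  rw [hsub] at h1
  have hq1 : q.eval 1 = p.eval (a + h) := by rw [hqev]; ring_nf
  rw [hq1] at h1
  calc (p.eval (a+h))^2 ≤ ((k:ℝ)+1)^2 * (h⁻¹ * ∫ x in a..(a+h), (p.eval x)^2) := h1
    _ = ((k:ℝ)+1)^2 * h⁻¹ * ∫ x in a..(a+h), (p.eval x)^2 := by ring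

open intervalIntegral MeasureTheory in
/-- Scaled discrete trace inequality on a square element of side length `h`:
if `v` is a tensor-product polynomial of degree at most `k` in each of the two
variables (i.e. `v ∈ Q_k`), `K = [a, a+h] × [b, b+h]` and `F = {a+h} × [b, b+h]`
is its right edge, then
`∫_b^{b+h} v(a+h,y)^2 dy ≤ (k+1)^2 * h⁻¹ * ∫_a^{a+h} ∫_b^{b+h} v(x,y)^2 dy dx`. -/
theorem discrete_trace_inequality_square_scaled (k : ℕ) (h a b : ℝ) (hh : 0 < h)
    (v : ℝ × ℝ → ℝ) (P : MvPolynomial (Fin 2) ℝ)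
    (hP : ∀ i : Fin 2, P.degreeOf i ≤ k)
    (hv : ∀ x y : ℝ, v (x, y) = MvPolynomial.eval ![x, y] P) :
    (∫ y in b..(b + h), (v (a + h, y)) ^ 2) ≤
      ((k : ℝ) + 1) ^ 2 * h⁻¹ *
        ∫ x in a..(a + h), ∫ y in b..(b + h), (v (x, y)) ^ 2 := by
  have hab : a ≤ a + h := by linarith
  have hbb : b ≤ b + h := by linarith
  set Q := MvPolynomial.finSuccEquiv ℝ 1 P with hQ
  have hvp : ∀ x y : ℝ, v (x, y) = (Polynomial.map (MvPolynomial.eval ![y]) Q).eval x := by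
    intro x y
    rw [hv x y]
    exact MvPolynomial.eval_eq_eval_mv_eval' ![y] x P
  have hdeg : ∀ y : ℝ, (Polynomial.map (MvPolynomial.eval ![y]) Q).natDegree ≤ k := by
    intro y
    refine le_trans Polynomial.natDegree_map_le ?_
    rw [hQ, MvPolynomial.natDegree_finSuccEquiv]
    exact hP 0
  have point : ∀ y : ℝ, (v (a+h, y))^2
      ≤ ((k:ℝ)+1)^2 * h⁻¹ * ∫ x in a..(a+h), (v (x,y))^2 := by
    intro y
    have h1 := trace_interval k h a hh _ (hdeg y)
    have hcongr : (∫ x in a..(a+h), ((Polynomial.map (MvPolynomial.eval ![y]) Q).eval x)^2)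
        = ∫ x in a..(a+h), (v (x,y))^2 := by
      apply intervalIntegral.integral_congr; intro x _; simp only [hvp x y]
    rw [hcongr] at h1
    rw [hvp (a+h) y]
    exact h1
  have hcont2 : Continuous (fun q : ℝ × ℝ => (v q)^2) := by
    have he : (fun q : ℝ × ℝ => (v q)^2)
        = fun q : ℝ × ℝ => (MvPolynomial.eval ![q.1, q.2] P)^2 := by
      funext q; rw [← hv q.1 q.2]
    rw [he]
    apply Continuous.pow
    have h1 : Continuous (fun q : ℝ × ℝ => (![q.1, q.2] : Fin 2 → ℝ)) := by
      apply continuous_pi; intro i; fin_cases i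
      · simpa using continuous_fst
      · simpa using continuous_snd
    have h2 := MvPolynomial.continuous_eval P
    exact h2.comp h1
  -- product integrability
  have hIcc : IntegrableOn (fun q : ℝ × ℝ => (v q)^2)
      ((Set.Icc a (a+h)) ×ˢ (Set.Icc b (b+h))) volume :=
    hcont2.continuousOn.integrableOn_compact (isCompact_Icc.prod isCompact_Icc)
  have hIoc : IntegrableOn (fun q : ℝ × ℝ => (v q)^2)
      ((Set.Ioc a (a+h)) ×ˢ (Set.Ioc b (b+h))) volume :=
    hIcc.mono_set (Set.prod_mono Set.Ioc_subset_Icc_self Set.Ioc_subset_Icc_self)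
  have hIprod : Integrable (fun q : ℝ × ℝ => (v q)^2)
      ((volume.restrict (Set.Ioc a (a+h))).prod (volume.restrict (Set.Ioc b (b+h)))) := by
    rw [Measure.prod_restrict]
    rw [← Measure.volume_eq_prod]
    exact hIoc
  have hswap : (∫ y in b..(b+h), ∫ x in a..(a+h), (v (x,y))^2)
      = ∫ x in a..(a+h), ∫ y in b..(b+h), (v (x,y))^2 := by
    rw [intervalIntegral.integral_of_le hbb, intervalIntegral.integral_of_le hab]
    simp_rw [intervalIntegral.integral_of_le hab, intervalIntegral.integral_of_le hbb]
    exact (MeasureTheory.integral_integral_swap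
      (f := fun x y => (v (x,y))^2) hIprod).symm
  have hIy0 : IntervalIntegrable (fun y => (v (a+h,y))^2) volume b (b+h) := by
    apply Continuous.intervalIntegrable
    exact hcont2.comp (continuous_const.prodMk continuous_id)
  have hIy1 : IntervalIntegrable (fun y => ∫ x in a..(a+h), (v (x,y))^2) volume b (b+h) := by
    rw [intervalIntegrable_iff_integrableOn_Ioc_of_le hbb]
    have := hIprod.integral_prod_right
    simp_rw [intervalIntegral.integral_of_le hab]
    exact this
  calc (∫ y in b..(b+h), (v (a+h,y))^2)
      ≤ ∫ y in b..(b+h), (((k:ℝ)+1)^2 * h⁻¹ * ∫ x in a..(a+h), (v (x,y))^2) := by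
        apply intervalIntegral.integral_mono_on hbb hIy0 (hIy1.const_mul _)
        intro y _; exact point y
    _ = ((k:ℝ)+1)^2 * h⁻¹ * ∫ y in b..(b+h), ∫ x in a..(a+h), (v (x,y))^2 :=
        intervalIntegral.integral_const_mul _ _
    _ = ((k:ℝ)+1)^2 * h⁻¹ * ∫ x in a..(a+h), ∫ y in b..(b+h), (v (x,y))^2 := by
        rw [hswap]
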